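/- Assume the separation and scale hypotheses. Let V ∈ 𝒱, θ ∈ Θ' := Θ \ {0}, and l ∈ ℤ. Suppose ξ ∈ Ξ(V) and that both ξ and ξ + lθ lie in Λ(θ). Then θ ∈ V and ξ + lθ ∈ Ξ(V). -/

import Mathlib

open scoped RealInnerProductSpace

noncomputable section

/-- `V` is a quasi-lattice subspace of dimension `m` generated by the frequency set `Θ`. -/
def QL (d : ℕ) (Θ : Finset (EuclideanSpace ℝ (Fin d))) (m : ℕ)
    (V : Submodule ℝ (EuclideanSpace ℝ (Fin d))) : Prop :=
  ∃ v : Fin m → EuclideanSpace ℝ (Fin d),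
    (∀ i, v i ∈ Θ) ∧ LinearIndependent ℝ v ∧ V = Submodule.span ℝ (Set.range v)

/-- `V` is a quasi-lattice subspace (of some dimension). -/
def QLat (d : ℕ) (Θ : Finset (EuclideanSpace ℝ (Fin d)))
    (V : Submodule ℝ (EuclideanSpace ℝ (Fin d))) : Prop :=
  ∃ m, QL d Θ m V

/-- `Ξ₁(V)`: the union, over all flags `F` generated by `V` (with a generated sequence `ν`),
of the slabs `Λ(F) = {ξ : |⟪ξ, ν j⟫| ≤ L j}`. -/
def XiOne (d : ℕ) (Θ : Finset (EuclideanSpace ℝ (Fin d))) (L : ℕ → ℝ)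
    (V : Submodule ℝ (EuclideanSpace ℝ (Fin d))) : Set (EuclideanSpace ℝ (Fin d)) :=
  {ξ | ∃ (m : ℕ) (F : Fin (m + 1) → Submodule ℝ (EuclideanSpace ℝ (Fin d)))
        (ν : Fin m → EuclideanSpace ℝ (Fin d)),
      (∀ j : Fin (m + 1), QL d Θ (j : ℕ) (F j)) ∧
      (∀ i : Fin m, F i.castSucc < F i.succ) ∧
      F (Fin.last m) = V ∧
      (∀ i : Fin m, ‖ν i‖ = 1 ∧ ν i ∈ F i.succ ∧ ν i ∈ (F i.castSucc)ᗮ) ∧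
      (∀ i : Fin m, |⟪ξ, ν i⟫| ≤ L ((i : ℕ) + 1))}

/-- The resonance region `Ξ(V) = Ξ₁(V) \ ⋃_{U ⊋ V} Ξ₁(U)`. -/
def Xi (d : ℕ) (Θ : Finset (EuclideanSpace ℝ (Fin d))) (L : ℕ → ℝ)
    (V : Submodule ℝ (EuclideanSpace ℝ (Fin d))) : Set (EuclideanSpace ℝ (Fin d)) :=
  XiOne d Θ L V \
    ⋃ U ∈ {U : Submodule ℝ (EuclideanSpace ℝ (Fin d)) | QLat d Θ U ∧ V < U},
      XiOne d Θ L U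

/-- The resonance zone `Λ(θ) = {ξ : |⟪ξ, θ⟫| ≤ L 1 · ‖θ‖}` generated by `θ`. -/
def LamT (d : ℕ) (L : ℕ → ℝ) (θ : EuclideanSpace ℝ (Fin d)) :
    Set (EuclideanSpace ℝ (Fin d)) :=
  {ξ | |⟪ξ, θ⟫| ≤ L 1 * ‖θ‖}

section Helpers

variable {d : ℕ} {Θ : Finset (EuclideanSpace ℝ (Fin d))}
local notation "E'" => EuclideanSpace ℝ (Fin d)

lemma ql_finrank {m : ℕ} {V : Submodule ℝ E'} (h : QL d Θ m V) :
    Module.finrank ℝ V = m := by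
  obtain ⟨v, -, hli, rfl⟩ := h
  rw [finrank_span_eq_card hli, Fintype.card_fin]

lemma ql_bot : QL d Θ 0 (⊥ : Submodule ℝ E') :=
  ⟨Fin.elim0, fun i => i.elim0, linearIndependent_empty_type, by simp⟩

lemma ql_zero {V : Submodule ℝ E'} (h : QL d Θ 0 V) : V = ⊥ := by
  obtain ⟨v, -, -, rfl⟩ := h
  simp [Set.range_eq_empty]

lemma ql_cons {m : ℕ} {V : Submodule ℝ E'} {θ : E'} (hθ : θ ∈ Θ) (hθV : θ ∉ V)
    (h : QL d Θ m V) : QL d Θ (m + 1) ((ℝ ∙ θ) ⊔ V) := by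
  obtain ⟨v, hvΘ, hli, rfl⟩ := h
  refine ⟨Fin.cons θ v, ?_, ?_, ?_⟩
  · intro i; refine Fin.cases ?_ ?_ i <;> simp [hθ, hvΘ]
  · exact linearIndependent_fin_cons.2 ⟨hli, hθV⟩
  · rw [Fin.range_cons, Submodule.span_insert]

lemma ql_singleton {θ : E'} (hθ : θ ∈ Θ) (hθ0 : θ ≠ 0) : QL d Θ 1 (ℝ ∙ θ) := by
  have h := ql_cons (V := ⊥) hθ (by simp [hθ0]) ql_bot
  simpa using h

lemma finrank_le_d {V : Submodule ℝ E'} : Module.finrank ℝ V ≤ d := by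
  simpa [finrank_euclideanSpace_fin] using V.finrank_le

lemma exists_unit_orth {U W : Submodule ℝ E'} (h : U < W) :
    ∃ u : E', ‖u‖ = 1 ∧ u ∈ W ∧ u ∈ Uᗮ := by
  obtain ⟨x, hxW, hxU⟩ := SetLike.exists_of_lt h
  set w := x - (Submodule.orthogonalProjectionOnto U x : E') with hw
  have hwo : w ∈ Uᗮ := Submodule.sub_starProjection_mem_orthogonal x
  have hwW : w ∈ W := sub_mem hxW (h.le (Submodule.orthogonalProjectionOnto U x).2)
  have hw0 : w ≠ 0 := by
    intro h0
    apply hxU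
    have hx : x = (Submodule.orthogonalProjectionOnto U x : E') := by
      rw [hw, sub_eq_zero] at h0; exact h0
    rw [hx]; exact (Submodule.orthogonalProjectionOnto U x).2
  exact ⟨‖w‖⁻¹ • w, by
      simp [norm_smul, inv_mul_cancel₀ (norm_ne_zero_iff.2 hw0)],
    Submodule.smul_mem _ _ hwW, Submodule.smul_mem _ _ hwo⟩

lemma abs_inner_le_proj {W : Submodule ℝ E'} {u : E'} (hu : u ∈ W) (h1 : ‖u‖ = 1) (ξ : E') :
    |⟪ξ, u⟫| ≤ ‖(Submodule.orthogonalProjectionOnto W ξ : E')‖ := by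
  have h2 : ⟪ξ, u⟫ = ⟪(Submodule.orthogonalProjectionOnto W ξ : E'), u⟫ := by
    have h := Submodule.starProjection_inner_eq_zero ξ u hu
    rw [inner_sub_left] at h; rw [Submodule.coe_orthogonalProjectionOnto_apply]; linarith
  rw [h2]
  calc |⟪(Submodule.orthogonalProjectionOnto W ξ : E'), u⟫|
      ≤ ‖(Submodule.orthogonalProjectionOnto W ξ : E')‖ * ‖u‖ := abs_real_inner_le_norm _ _
    _ = _ := by rw [h1, mul_one]

lemma proj_singleton_le {θ : E'} (hθ0 : θ ≠ 0) {ξ : E'} {c : ℝ} (h : |⟪ξ, θ⟫| ≤ c * ‖θ‖) :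
    ‖(Submodule.orthogonalProjectionOnto (ℝ ∙ θ) ξ : E')‖ ≤ c := by
  have hn : (0 : ℝ) < ‖θ‖ := norm_pos_iff.2 hθ0
  rw [Submodule.coe_orthogonalProjectionOnto_apply, Submodule.starProjection_singleton, norm_smul, Real.norm_eq_abs]
  simp only [RCLike.ofReal_real_eq_id, id_eq]
  have he : |⟪θ, ξ⟫ / (‖θ‖ ^ 2 : ℝ)| * ‖θ‖ = |⟪θ, ξ⟫| / ‖θ‖ := by
    rw [abs_div, abs_pow, abs_norm]
    field_simp
  rw [he, div_le_iff₀ hn, real_inner_comm]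
  exact h


lemma flag_span_proj {m : ℕ} {F : Fin (m + 1) → Submodule ℝ E'} {ν : Fin m → E'}
    {L : ℕ → ℝ} {ξ : E'}
    (hQL : ∀ j : Fin (m + 1), QL d Θ (j : ℕ) (F j))
    (hch : ∀ i : Fin m, F i.castSucc < F i.succ)
    (hν : ∀ i : Fin m, ‖ν i‖ = 1 ∧ ν i ∈ F i.succ ∧ ν i ∈ (F i.castSucc)ᗮ)
    (hslab : ∀ i : Fin m, |⟪ξ, ν i⟫| ≤ L ((i : ℕ) + 1))
    (n : ℕ) (hn : n ≤ m) :
    ‖(Submodule.orthogonalProjectionOnto (F ⟨n, by omega⟩) ξ : E')‖ ≤ ∑ i ∈ Finset.range n, L (i + 1) := by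
  have hmono : Monotone F := (Fin.strictMono_iff_lt_succ.2 hch).monotone
  set e : Fin n → E' := fun i => ν ⟨(i : ℕ), by omega⟩ with he
  have key : ∀ i j : Fin n, (i : ℕ) < (j : ℕ) → ⟪e i, e j⟫ = 0 := by
    intro i j hij
    have h1 : e i ∈ F (⟨(j : ℕ), by omega⟩ : Fin m).castSucc := by
      refine hmono ?_ (hν ⟨(i : ℕ), by omega⟩).2.1
      simp only [Fin.le_def, Fin.val_succ, Fin.coe_castSucc]
      omega
    exact (Submodule.mem_orthogonal _ _).1 (hν ⟨(j : ℕ), by omega⟩).2.2 _ h1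
  have hinner : ∀ i j : Fin n, i ≠ j → ⟪e i, e j⟫ = 0 := by
    intro i j hij
    rcases Nat.lt_or_ge (i : ℕ) (j : ℕ) with h | h
    · exact key i j h
    · have h2 : (j : ℕ) < (i : ℕ) := by
        rcases Nat.lt_or_ge (j : ℕ) (i : ℕ) with h' | h'
        · exact h'
        · exact absurd (Fin.ext (by omega)) hij
      rw [real_inner_comm]; exact key j i h2
  have horth : Orthonormal ℝ e := by
    rw [orthonormal_iff_ite]
    intro i j
    by_cases h : i = j
    · subst h
      rw [if_pos rfl, real_inner_self_eq_norm_mul_norm, (hν _).1, mul_one]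
    · simp [h, hinner i j h]
  have hle : Submodule.span ℝ (Set.range e) ≤ F ⟨n, by omega⟩ := by
    rw [Submodule.span_le]
    rintro x ⟨i, rfl⟩
    refine hmono ?_ (hν ⟨(i : ℕ), by omega⟩).2.1
    simp only [Fin.le_def, Fin.val_succ]
    omega
  have heq : Submodule.span ℝ (Set.range e) = F ⟨n, by omega⟩ := by
    refine Submodule.eq_of_le_of_finrank_eq hle ?_
    rw [finrank_span_eq_card horth.linearIndependent, Fintype.card_fin]
    have := ql_finrank (hQL ⟨n, by omega⟩)
    simpa using this.symm
  set y : E' := ∑ i : Fin n, ⟪ξ, e i⟫ • e i with hy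
  have hyW : y ∈ F ⟨n, by omega⟩ := by
    rw [← heq]
    exact Submodule.sum_mem _ fun i _ => Submodule.smul_mem _ _ (Submodule.subset_span ⟨i, rfl⟩)
  have hproj : (Submodule.orthogonalProjectionOnto (F ⟨n, by omega⟩) ξ : E') = y := by
    refine Submodule.eq_starProjection_of_mem_of_inner_eq_zero hyW ?_
    intro w hw
    rw [← heq] at hw
    refine Submodule.span_induction ?_ ?_ ?_ ?_ hw
    · rintro x ⟨i, rfl⟩
      rw [inner_sub_left, hy, sum_inner, sub_eq_zero]
      have hterm : ∀ j : Fin n, ⟪(⟪ξ, e j⟫ : ℝ) • e j, e i⟫ = if j = i then ⟪ξ, e i⟫ else 0 := by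
        intro j
        rw [real_inner_smul_left]
        by_cases h : j = i
        · subst h
          rw [real_inner_self_eq_norm_mul_norm, (hν _).1]
          simp
        · simp [hinner j i h, h]
      rw [Finset.sum_congr rfl fun j _ => hterm j]
      simp
    · simp
    · intro x z _ _ hx hz
      rw [inner_add_right, hx, hz, add_zero]
    · intro a x _ hx
      rw [inner_smul_right, hx, mul_zero]
  rw [hproj, hy]
  calc ‖∑ i : Fin n, (⟪ξ, e i⟫ : ℝ) • e i‖ ≤ ∑ i : Fin n, ‖(⟪ξ, e i⟫ : ℝ) • e i‖ :=
        norm_sum_le _ _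
    _ = ∑ i : Fin n, |⟪ξ, e i⟫| := by
        refine Finset.sum_congr rfl fun i _ => ?_
        rw [norm_smul, Real.norm_eq_abs, (hν _).1, mul_one]
    _ ≤ ∑ i : Fin n, L ((i : ℕ) + 1) :=
        Finset.sum_le_sum fun i _ => hslab ⟨(i : ℕ), by omega⟩
    _ = ∑ i ∈ Finset.range n, L (i + 1) := Fin.sum_univ_eq_sum_range (fun i => L (i + 1)) n

lemma L_mono' {L : ℕ → ℝ} (hLmono : ∀ j, 1 ≤ j → j < d → L j ≤ L (j + 1)) :
    ∀ a b, 1 ≤ a → a ≤ b → b ≤ d → L a ≤ L b := by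
  intro a b ha hab hbd
  induction b with
  | zero => omega
  | succ n ih =>
    rcases Nat.lt_or_ge a (n + 1) with h | h
    · exact le_trans (ih (by omega) (by omega)) (hLmono n (by omega) (by omega))
    · have : a = n + 1 := by omega
      subst this; exact le_refl _

lemma sum_L_le {L : ℕ → ℝ} (hLmono : ∀ j, 1 ≤ j → j < d → L j ≤ L (j + 1))
    (n : ℕ) (hnd : n ≤ d) :
    ∑ i ∈ Finset.range n, L (i + 1) ≤ (n : ℝ) * L n := by
  calc ∑ i ∈ Finset.range n, L (i + 1) ≤ ∑ _i ∈ Finset.range n, L n := by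
        refine Finset.sum_le_sum fun i hi => ?_
        have hi' : i + 1 ≤ n := Finset.mem_range.1 hi
        exact L_mono' hLmono (i + 1) n (by omega) hi' hnd
    _ = (n : ℝ) * L n := by rw [Finset.sum_const, Finset.card_range]; simp

lemma arith_bound (hd : 1 ≤ d) {L : ℕ → ℝ} (hL1 : 0 < L 1)
    (hLmono : ∀ j, 1 ≤ j → j < d → L j ≤ L (j + 1))
    {s : ℝ} (hs0 : 0 < s) {R : ℝ} (hR0 : 0 ≤ R)
    (hscale : ∀ j, 1 ≤ j → j + 1 ≤ d → 2 * d * L j / s + R ≤ L (j + 1))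
    (n : ℕ) (h1n : 1 ≤ n) (hnd : n + 1 ≤ d) {x : ℝ}
    (hx : x ≤ (L 1 + (n : ℝ) * L n) / s) : x ≤ L (n + 1) := by
  have e1 : L 1 ≤ L n := L_mono' hLmono 1 n le_rfl h1n (by omega)
  have e2 : 0 < L n := lt_of_lt_of_le hL1 e1
  have e3 : (n : ℝ) ≤ (d : ℝ) - 1 := by
    have : (n : ℝ) + 1 ≤ (d : ℝ) := by exact_mod_cast hnd
    linarith
  have key : L 1 + (n : ℝ) * L n ≤ 2 * (d : ℝ) * L n := by nlinarith
  have h5 := hscale n h1n hnd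
  have h6 : (L 1 + (n : ℝ) * L n) / s ≤ 2 * (d : ℝ) * L n / s := by
    gcongr
  linarith [h6]

end Helpers

lemma lemB {d : ℕ} {Θ : Finset (EuclideanSpace ℝ (Fin d))}
    {L : ℕ → ℝ} (hL1 : 0 < L 1)
    (hLmono : ∀ j, 1 ≤ j → j < d → L j ≤ L (j + 1))
    {s : ℝ} (hs0 : 0 < s)
    (hsep : ∀ U V : Submodule ℝ (EuclideanSpace ℝ (Fin d)), QLat d Θ U → QLat d Θ V →
      ¬ U ≤ V → ¬ V ≤ U → ∀ ξ : EuclideanSpace ℝ (Fin d),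
        ‖(Submodule.orthogonalProjectionOnto (U ⊔ V) ξ : EuclideanSpace ℝ (Fin d))‖ ≤
          (‖(Submodule.orthogonalProjectionOnto U ξ : EuclideanSpace ℝ (Fin d))‖ +
            ‖(Submodule.orthogonalProjectionOnto V ξ : EuclideanSpace ℝ (Fin d))‖) / s)
    {R : ℝ} (hR0 : 0 ≤ R)
    (hscale : ∀ j, 1 ≤ j → j + 1 ≤ d → 2 * d * L j / s + R ≤ L (j + 1))
    {V : Submodule ℝ (EuclideanSpace ℝ (Fin d))} {θ : EuclideanSpace ℝ (Fin d)}
    (hθ : θ ∈ Θ) (hθ0 : θ ≠ 0) (hθV : θ ∉ V)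
    {ξ : EuclideanSpace ℝ (Fin d)} (hξ : ξ ∈ XiOne d Θ L V) (h1 : ξ ∈ LamT d L θ) :
    ξ ∈ XiOne d Θ L ((ℝ ∙ θ) ⊔ V) := by
  obtain ⟨m, F, ν, hQL, hch, hlast, hν, hslab⟩ := hξ
  have hQLV : QL d Θ m V := by
    have := hQL (Fin.last m)
    rwa [hlast, Fin.val_last] at this
  have hrankV : Module.finrank ℝ V = m := ql_finrank hQLV
  have hQLW : QL d Θ (m + 1) ((ℝ ∙ θ) ⊔ V) := ql_cons hθ hθV hQLV
  have hmd : m + 1 ≤ d := by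
    have := finrank_le_d (V := (ℝ ∙ θ) ⊔ V)
    rwa [ql_finrank hQLW] at this
  have hVW : V < (ℝ ∙ θ) ⊔ V := by
    refine lt_of_le_of_ne le_sup_right fun h => ?_
    exact hθV (h ▸ Submodule.mem_sup_left (Submodule.mem_span_singleton_self θ))
  obtain ⟨u, hu1, huW, huV⟩ := exists_unit_orth hVW
  -- the key estimate
  have hbound : |⟪ξ, u⟫| ≤ L (m + 1) := by
    rcases Nat.eq_zero_or_pos m with hm0 | hm1
    · -- m = 0 : V = ⊥
      subst hm0
      have hVbot : V = ⊥ := ql_zero hQLV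
      have hWθ : (ℝ ∙ θ) ⊔ V = ℝ ∙ θ := by rw [hVbot, sup_bot_eq]
      have h := abs_inner_le_proj (hWθ ▸ huW) hu1 ξ
      refine le_trans h ?_
      simpa using proj_singleton_le hθ0 h1
    · -- m ≥ 1
      have sd1 : ¬ (ℝ ∙ θ) ≤ V := fun h =>
        hθV (h (Submodule.mem_span_singleton_self θ))
      have sd2 : ¬ V ≤ (ℝ ∙ θ) := by
        intro h
        have hr1 : Module.finrank ℝ (ℝ ∙ θ) = 1 := finrank_span_singleton hθ0
        have hle1 : m ≤ 1 := by
          have := Submodule.finrank_mono h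
          rwa [hrankV, hr1] at this
        have hm1' : m = 1 := by omega
        have : V = (ℝ ∙ θ) := Submodule.eq_of_le_of_finrank_eq h (by rw [hrankV, hr1, hm1'])
        exact hθV (this ▸ Submodule.mem_span_singleton_self θ)
      have hsepa := hsep (ℝ ∙ θ) V ⟨1, ql_singleton hθ hθ0⟩ ⟨m, hQLV⟩ sd1 sd2 ξ
      have hproj1 : ‖(Submodule.orthogonalProjectionOnto (ℝ ∙ θ) ξ : EuclideanSpace ℝ (Fin d))‖ ≤ L 1 :=
        proj_singleton_le hθ0 h1
      have hproj2 : ‖(Submodule.orthogonalProjectionOnto V ξ : EuclideanSpace ℝ (Fin d))‖ ≤ (m : ℝ) * L m := by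
        have hFm : F ⟨m, by omega⟩ = V := by
          have : (⟨m, by omega⟩ : Fin (m + 1)) = Fin.last m := rfl
          rw [this, hlast]
        have := flag_span_proj hQL hch hν hslab m le_rfl
        rw [hFm] at this
        exact le_trans this (sum_L_le hLmono m (by omega))
      have habs := abs_inner_le_proj huW hu1 ξ
      refine arith_bound (by omega) hL1 hLmono hs0 hR0 hscale m hm1 hmd ?_
      refine le_trans habs (le_trans hsepa ?_)
      gcongr
  -- assemble the new flag via snoc
  refine ⟨m + 1, Fin.snoc F ((ℝ ∙ θ) ⊔ V), Fin.snoc ν u, ?_, ?_, ?_, ?_, ?_⟩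
  · intro j
    refine Fin.lastCases ?_ ?_ j
    · rw [Fin.snoc_last, Fin.val_last]
      exact hQLW
    · intro i
      rw [Fin.snoc_castSucc]
      simpa using hQL i
  · intro i
    refine Fin.lastCases ?_ ?_ i
    · rw [Fin.succ_last, Fin.snoc_last, Fin.snoc_castSucc, hlast]
      exact hVW
    · intro i0
      rw [Fin.succ_castSucc]
      simp only [Fin.snoc_castSucc]
      exact hch i0
  · rw [Fin.snoc_last]
  · intro i
    refine Fin.lastCases ?_ ?_ i
    · rw [Fin.succ_last, Fin.snoc_last, Fin.snoc_last, Fin.snoc_castSucc, hlast]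
      exact ⟨hu1, huW, huV⟩
    · intro i0
      rw [Fin.succ_castSucc]
      simp only [Fin.snoc_castSucc]
      exact hν i0
  · intro i
    refine Fin.lastCases ?_ ?_ i
    · rw [Fin.snoc_last, Fin.val_last]
      exact hbound
    · intro i0
      rw [Fin.snoc_castSucc]
      simpa using hslab i0
lemma lemA {d : ℕ} {Θ : Finset (EuclideanSpace ℝ (Fin d))}
    {L : ℕ → ℝ} (hL1 : 0 < L 1)
    (hLmono : ∀ j, 1 ≤ j → j < d → L j ≤ L (j + 1))
    {s : ℝ} (hs0 : 0 < s)
    (hsep : ∀ U V : Submodule ℝ (EuclideanSpace ℝ (Fin d)), QLat d Θ U → QLat d Θ V →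
      ¬ U ≤ V → ¬ V ≤ U → ∀ ξ : EuclideanSpace ℝ (Fin d),
        ‖(Submodule.orthogonalProjectionOnto (U ⊔ V) ξ : EuclideanSpace ℝ (Fin d))‖ ≤
          (‖(Submodule.orthogonalProjectionOnto U ξ : EuclideanSpace ℝ (Fin d))‖ +
            ‖(Submodule.orthogonalProjectionOnto V ξ : EuclideanSpace ℝ (Fin d))‖) / s)
    {R : ℝ} (hR0 : 0 ≤ R)
    (hscale : ∀ j, 1 ≤ j → j + 1 ≤ d → 2 * d * L j / s + R ≤ L (j + 1))
    {W : Submodule ℝ (EuclideanSpace ℝ (Fin d))} {θ : EuclideanSpace ℝ (Fin d)}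
    (hθ : θ ∈ Θ) (hθ0 : θ ≠ 0) (hθW : θ ∈ W)
    {t : ℝ} {ξ : EuclideanSpace ℝ (Fin d)} (hξ : ξ ∈ XiOne d Θ L W)
    (h1 : ξ ∈ LamT d L θ) (h2 : ξ + t • θ ∈ LamT d L θ) :
    ξ + t • θ ∈ XiOne d Θ L W := by
  classical
  obtain ⟨m, F, ν, hQL, hch, hlast, hν, hslab⟩ := hξ
  have hmono : Monotone F := (Fin.strictMono_iff_lt_succ.2 hch).monotone
  set A : ℕ → Submodule ℝ (EuclideanSpace ℝ (Fin d)) := fun n => F ⟨min n m, by omega⟩ with hA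
  have hAF : ∀ (n : ℕ) (h : n ≤ m), A n = F ⟨n, by omega⟩ := by
    intro n h
    simp only [hA]
    congr 1
    exact Fin.ext (by simpa using Nat.min_eq_left h)
  have hAmono : Monotone A := fun a b hab =>
    hmono (Fin.mk_le_mk.mpr (by omega))
  have hAQL : ∀ n, n ≤ m → QL d Θ n (A n) := by
    intro n hn
    rw [hAF n hn]
    simpa using hQL ⟨n, by omega⟩
  have hAm : A m = W := by
    rw [hAF m le_rfl, ← hlast]
    congr 1
  have hA0 : A 0 = ⊥ := ql_zero (hAQL 0 (by omega))
  have hmd : m ≤ d := by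
    have h := finrank_le_d (V := A m)
    rwa [ql_finrank (hAQL m le_rfl)] at h
  have hex : ∃ n, θ ∈ A n := ⟨m, hAm ▸ hθW⟩
  set k := Nat.find hex with hkdef
  have hθk : θ ∈ A k := Nat.find_spec hex
  have hkmin : ∀ j, j < k → θ ∉ A j := fun j hj => Nat.find_min hex hj
  have hkm : k ≤ m := Nat.find_le (hAm ▸ hθW)
  have hk1 : 1 ≤ k := by
    by_contra h
    have hk0 : k = 0 := by omega
    rw [hk0, hA0] at hθk
    exact hθ0 (by simpa using hθk)
  set G : ℕ → Submodule ℝ (EuclideanSpace ℝ (Fin d)) :=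
    fun n => if n = 0 then ⊥ else if n ≤ k then (ℝ ∙ θ) ⊔ A (n - 1) else A n with hG
  have hG0 : G 0 = ⊥ := by simp [hG]
  have hGmid : ∀ n, 1 ≤ n → n ≤ k → G n = (ℝ ∙ θ) ⊔ A (n - 1) := by
    intro n h1' h2'
    simp only [hG]
    rw [if_neg (by omega), if_pos h2']
  have hGhigh : ∀ n, k < n → G n = A n := by
    intro n h
    simp only [hG]
    rw [if_neg (by omega), if_neg (by omega)]
  have hGQL : ∀ n, n ≤ m → QL d Θ n (G n) := by
    intro n hn
    rcases Nat.eq_zero_or_pos n with rfl | hn1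
    · rw [hG0]; exact ql_bot
    · rcases le_or_gt n k with h | h
      · rw [hGmid n hn1 h]
        obtain ⟨n', rfl⟩ : ∃ n', n = n' + 1 := ⟨n - 1, by omega⟩
        simpa [Nat.add_sub_cancel] using
          ql_cons hθ (hkmin n' (by omega)) (hAQL n' (by omega))
      · rw [hGhigh n h]; exact hAQL n hn
  have hGk : G k = A k := by
    refine Submodule.eq_of_le_of_finrank_eq ?_ ?_
    · rw [hGmid k hk1 le_rfl]
      refine sup_le ?_ (hAmono (by omega))
      rwa [Submodule.span_singleton_le_iff_mem]
    · rw [ql_finrank (hGQL k hkm), ql_finrank (hAQL k hkm)]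
  have hGge : ∀ n, k ≤ n → G n = A n := by
    intro n h
    rcases eq_or_lt_of_le h with rfl | h'
    · exact hGk
    · exact hGhigh n h'
  have hGle : ∀ n, n < m → G n ≤ G (n + 1) := by
    intro n hn
    rcases Nat.eq_zero_or_pos n with rfl | hn1
    · rw [hG0]; exact bot_le
    · rcases le_or_gt (n + 1) k with h | h
      · rw [hGmid n hn1 (by omega), hGmid (n + 1) (by omega) h]
        exact sup_le_sup_left (hAmono (by omega)) _
      · rw [hGge n (by omega), hGge (n + 1) (by omega)]
        exact hAmono (by omega)
  have hGlt : ∀ n, n < m → G n < G (n + 1) := by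
    intro n hn
    refine lt_of_le_of_ne (hGle n hn) fun h => ?_
    have h1' := ql_finrank (hGQL n (by omega))
    rw [h, ql_finrank (hGQL (n + 1) (by omega))] at h1'
    omega
  have hex2 : ∀ j : ℕ, 1 ≤ j → j ≤ m → ∃ u, ‖u‖ = 1 ∧ u ∈ G j ∧ u ∈ (G (j - 1))ᗮ := by
    intro j hj1 hjm
    have h := hGlt (j - 1) (by omega)
    rw [show j - 1 + 1 = j by omega] at h
    exact exists_unit_orth h
  set νN : ℕ → EuclideanSpace ℝ (Fin d) := fun j =>
    if hj : 2 ≤ j ∧ j ≤ k then (hex2 j (by omega) (by omega)).choose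
    else if j = 1 then ‖θ‖⁻¹ • θ
    else if hj' : j - 1 < m then ν ⟨j - 1, hj'⟩ else 0 with hνN
  have hνN1 : νN 1 = ‖θ‖⁻¹ • θ := by
    simp only [hνN]
    rw [dif_neg (by omega)]
    simp
  have hνNmid : ∀ j, 2 ≤ j → j ≤ k → ‖νN j‖ = 1 ∧ νN j ∈ G j ∧ νN j ∈ (G (j - 1))ᗮ := by
    intro j h1' h2'
    simp only [hνN]
    rw [dif_pos ⟨h1', h2'⟩]
    exact (hex2 j (by omega) (by omega)).choose_spec
  have hνNhigh : ∀ (j : ℕ) (hk' : k < j) (hm' : j ≤ m), νN j = ν ⟨j - 1, by omega⟩ := by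
    intro j hk' hm'
    simp only [hνN]
    rw [dif_neg (by omega), if_neg (by omega), dif_pos (by omega)]
  -- unit vector for slot 1
  have hθunit : ‖(‖θ‖⁻¹ • θ : EuclideanSpace ℝ (Fin d))‖ = 1 := by
    rw [norm_smul, norm_inv, norm_norm]
    exact inv_mul_cancel₀ (norm_ne_zero_iff.2 hθ0)
  refine ⟨m, fun j => G (j : ℕ), fun i => νN ((i : ℕ) + 1), ?_, ?_, ?_, ?_, ?_⟩
  · intro j
    exact hGQL (j : ℕ) (by omega)
  · intro i
    simp only [Fin.coe_castSucc, Fin.val_succ]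
    exact hGlt (i : ℕ) i.isLt
  · simp only [Fin.val_last]
    rw [hGge m hkm, hAm]
  · intro i
    have him : (i : ℕ) < m := i.isLt
    simp only [Fin.coe_castSucc, Fin.val_succ]
    rcases Nat.lt_or_ge k ((i : ℕ) + 1) with hcase | hcase
    · -- high range
      have e := hνNhigh ((i : ℕ) + 1) hcase (by omega)
      have g1 : G ((i : ℕ) + 1) = F i.succ := by
        rw [hGhigh _ hcase, hAF _ (by omega)]
        congr 1
      have g2 : G (i : ℕ) = F i.castSucc := by
        rw [hGge _ (by omega), hAF _ (by omega)]
        congr 1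
      rw [e, g1, g2]
      exact hν i
    · rcases Nat.eq_zero_or_pos (i : ℕ) with hz | hpos
      · simp only [hz]
        rw [hνN1]
        refine ⟨hθunit, ?_, ?_⟩
        · rw [hGmid 1 le_rfl (by omega)]
          exact Submodule.mem_sup_left
            (Submodule.smul_mem _ _ (Submodule.mem_span_singleton_self θ))
        · rw [hG0, Submodule.bot_orthogonal_eq_top]
          exact Submodule.mem_top
      · exact hνNmid ((i : ℕ) + 1) (by omega) hcase
  · intro i
    have him : (i : ℕ) < m := i.isLt
    show |⟪ξ + t • θ, νN ((i : ℕ) + 1)⟫| ≤ L ((i : ℕ) + 1)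
    rcases Nat.lt_or_ge k ((i : ℕ) + 1) with hcase | hcase
    · -- high range : inner with θ vanishes
      have e := hνNhigh ((i : ℕ) + 1) hcase (by omega)
      have horthA : ν i ∈ (A (i : ℕ))ᗮ := by
        rw [hAF _ (by omega)]
        have : (⟨(i : ℕ), by omega⟩ : Fin (m + 1)) = i.castSucc := Fin.ext (by simp)
        rw [this]
        exact (hν i).2.2
      have hθA : θ ∈ A (i : ℕ) := hAmono (by omega : k ≤ (i : ℕ)) hθk
      have hzero : ⟪θ, ν i⟫ = 0 :=
        (Submodule.mem_orthogonal _ _).1 horthA θ hθA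
      rw [e]
      have : (⟨(i : ℕ) + 1 - 1, by omega⟩ : Fin m) = i := Fin.ext (by simp)
      rw [this, inner_add_left, real_inner_smul_left, hzero, mul_zero, add_zero]
      exact hslab i
    · rcases Nat.eq_zero_or_pos (i : ℕ) with hz | hpos
      · -- slot 1
        have hn : (0 : ℝ) < ‖θ‖ := norm_pos_iff.2 hθ0
        simp only [hz]
        rw [hνN1, real_inner_smul_right, abs_mul, abs_inv, abs_norm]
        rw [inv_mul_le_iff₀ hn, mul_comm (‖θ‖) (L (0 + 1))]
        have h2' : |⟪ξ + t • θ, θ⟫| ≤ L 1 * ‖θ‖ := h2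
        simpa using h2'
      · -- middle range
        obtain ⟨hu1, huG, huO⟩ := hνNmid ((i : ℕ) + 1) (by omega) hcase
        have hθG : θ ∈ G ((i : ℕ) + 1 - 1) := by
          rw [show (i : ℕ) + 1 - 1 = (i : ℕ) from rfl, hGmid (i : ℕ) hpos (by omega)]
          exact Submodule.mem_sup_left (Submodule.mem_span_singleton_self θ)
        have hzero : ⟪θ, νN ((i : ℕ) + 1)⟫ = 0 :=
          (Submodule.mem_orthogonal _ _).1 huO θ hθG
        rw [inner_add_left, real_inner_smul_left, hzero, mul_zero, add_zero]
        -- now bound |⟪ξ, u⟫|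
        have habs := abs_inner_le_proj huG hu1 ξ
        rw [hGmid ((i : ℕ) + 1) (by omega) hcase,
          show (i : ℕ) + 1 - 1 = (i : ℕ) from rfl] at habs
        have sd1 : ¬ (ℝ ∙ θ) ≤ A (i : ℕ) := fun h =>
          hkmin (i : ℕ) (by omega) (h (Submodule.mem_span_singleton_self θ))
        have sd2 : ¬ A (i : ℕ) ≤ (ℝ ∙ θ) := by
          intro h
          have hr1 : Module.finrank ℝ (ℝ ∙ θ) = 1 := finrank_span_singleton hθ0
          have hri : Module.finrank ℝ (A (i : ℕ)) = (i : ℕ) :=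
            ql_finrank (hAQL _ (by omega))
          have hle1 : (i : ℕ) ≤ 1 := by
            have h' := Submodule.finrank_mono h
            rwa [hri, hr1] at h'
          have hieq : (i : ℕ) = 1 := by omega
          have hAeq : A (i : ℕ) = (ℝ ∙ θ) :=
            Submodule.eq_of_le_of_finrank_eq h (by rw [hri, hr1, hieq])
          exact hkmin (i : ℕ) (by omega) (hAeq ▸ Submodule.mem_span_singleton_self θ)
        have hsepa := hsep (ℝ ∙ θ) (A (i : ℕ)) ⟨1, ql_singleton hθ hθ0⟩
          ⟨(i : ℕ), hAQL _ (by omega)⟩ sd1 sd2 ξ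
        have hproj1 : ‖(Submodule.orthogonalProjectionOnto (ℝ ∙ θ) ξ : EuclideanSpace ℝ (Fin d))‖ ≤ L 1 :=
          proj_singleton_le hθ0 h1
        have hproj2 :
            ‖(Submodule.orthogonalProjectionOnto (A (i : ℕ)) ξ : EuclideanSpace ℝ (Fin d))‖ ≤
              ((i : ℕ) : ℝ) * L (i : ℕ) := by
          have hAFi : A (i : ℕ) = F ⟨(i : ℕ), by omega⟩ := hAF _ (by omega)
          rw [hAFi]
          exact le_trans (flag_span_proj hQL hch hν hslab (i : ℕ) (by omega))
            (sum_L_le hLmono (i : ℕ) (by omega))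
        refine arith_bound (by omega) hL1 hLmono hs0 hR0 hscale (i : ℕ) hpos
          (by omega) ?_
        refine le_trans habs (le_trans hsepa ?_)
        gcongr

theorem xi_invariant_under_resonant_shift (d : ℕ) (hd : 1 ≤ d)
    (Θ : Finset (EuclideanSpace ℝ (Fin d)))
    (h0 : (0 : EuclideanSpace ℝ (Fin d)) ∈ Θ)
    (hsym : ∀ θ ∈ Θ, -θ ∈ Θ)
    (hspan : Submodule.span ℝ (Θ : Set (EuclideanSpace ℝ (Fin d))) = ⊤)
    (L : ℕ → ℝ) (hL1 : 0 < L 1)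
    (hLmono : ∀ j, 1 ≤ j → j < d → L j ≤ L (j + 1))
    (s : ℝ) (hs0 : 0 < s) (hs1 : s ≤ 1)
    (hsep : ∀ U V : Submodule ℝ (EuclideanSpace ℝ (Fin d)), QLat d Θ U → QLat d Θ V →
      ¬ U ≤ V → ¬ V ≤ U → ∀ ξ : EuclideanSpace ℝ (Fin d),
        ‖(Submodule.orthogonalProjectionOnto (U ⊔ V) ξ : EuclideanSpace ℝ (Fin d))‖ ≤
          (‖(Submodule.orthogonalProjectionOnto U ξ : EuclideanSpace ℝ (Fin d))‖ +
            ‖(Submodule.orthogonalProjectionOnto V ξ : EuclideanSpace ℝ (Fin d))‖) / s)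
    (R : ℝ) (hR : ∀ θ ∈ Θ, ‖θ‖ ≤ R)
    (hscale : ∀ j, 1 ≤ j → j + 1 ≤ d → 2 * d * L j / s + R ≤ L (j + 1))
    (V : Submodule ℝ (EuclideanSpace ℝ (Fin d))) (hV : QLat d Θ V)
    (θ : EuclideanSpace ℝ (Fin d)) (hθ : θ ∈ Θ) (hθ0 : θ ≠ 0) (l : ℤ)
    (ξ : EuclideanSpace ℝ (Fin d)) (hξ : ξ ∈ Xi d Θ L V)
    (h1 : ξ ∈ LamT d L θ) (h2 : ξ + (l : ℝ) • θ ∈ LamT d L θ) :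
    θ ∈ V ∧ ξ + (l : ℝ) • θ ∈ Xi d Θ L V := by
  obtain ⟨hmem, hnot⟩ := hξ
  have hR0 : 0 ≤ R := le_trans (norm_nonneg θ) (hR θ hθ)
  have hnot' : ∀ U : Submodule ℝ (EuclideanSpace ℝ (Fin d)), QLat d Θ U → V < U →
      ξ ∉ XiOne d Θ L U := by
    intro U hU hVU hmemU
    exact hnot (Set.mem_biUnion (⟨hU, hVU⟩ : U ∈ {U | QLat d Θ U ∧ V < U}) hmemU)
  have hθV : θ ∈ V := by
    by_contra hc
    have hB := lemB hL1 hLmono hs0 hsep hR0 hscale hθ hθ0 hc hmem h1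
    obtain ⟨mV, hQLV⟩ := hV
    refine hnot' ((ℝ ∙ θ) ⊔ V) ⟨mV + 1, ql_cons hθ hc hQLV⟩ ?_ hB
    refine lt_of_le_of_ne le_sup_right fun h => ?_
    exact hc (h ▸ Submodule.mem_sup_left (Submodule.mem_span_singleton_self θ))
  refine ⟨hθV, ?_, ?_⟩
  · exact lemA hL1 hLmono hs0 hsep hR0 hscale hθ hθ0 hθV hmem h1 h2
  · intro hmem2
    simp only [Set.mem_iUnion, Set.mem_setOf_eq] at hmem2
    obtain ⟨U, ⟨hQU, hVU⟩, hmemU⟩ := hmem2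
    have hback : (ξ + (l : ℝ) • θ) + (-(l : ℝ)) • θ = ξ := by
      rw [add_assoc, ← add_smul]
      simp
    have hA2 := lemA hL1 hLmono hs0 hsep hR0 hscale hθ hθ0 (hVU.le hθV) hmemU h2
      (by rw [hback]; exact h1)
    rw [hback] at hA2
    exact hnot' U hQU hVU hA2
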